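/- Let G be a Δ-regular graph on n vertices admitting a frozen (Δ+1)-colouring α, and let c be any colour. Then the colour class X = α⁻¹(c) has size n/(Δ+1) and the family of closed neighbourhoods {N[x] : x ∈ X} is a partition of V(G). -/
import Mathlib


/-- Let `G` be a `Δ`-regular graph on `n` vertices with a frozen
`(Δ+1)`-colouring `α` and let `c` be any colour. Then the colour class of `c` has
size `n/(Δ+1)` and the closed neighbourhoods of its vertices partition `V(G)`
(every vertex lies in the closed neighbourhood of exactly one vertex of the class). -/
theorem stmt_12 {V : Type*} [Fintype V] [DecidableEq V] (G : SimpleGraph V)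
    [DecidableRel G.Adj] (Δ : ℕ) (hreg : ∀ v, G.degree v = Δ)
    (α : V → Fin (Δ + 1))
    (hproper : ∀ u v, G.Adj u v → α u ≠ α v)
    (hfrozen : ∀ v c, ∃ u, (u = v ∨ G.Adj v u) ∧ α u = c)
    (c : Fin (Δ + 1)) :
    Nat.card {v : V // α v = c} * (Δ + 1) = Fintype.card V ∧
      ∀ v : V, ∃! x : V, α x = c ∧ (v = x ∨ G.Adj x v) := by
  classical
  set N : V → Finset V := fun v => insert v (G.neighborFinset v) with hN
  have hmem : ∀ v u, u ∈ N v ↔ (u = v ∨ G.Adj v u) := by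
    intro v u; simp [hN]
  have hcardN : ∀ v, (N v).card = Δ + 1 := by
    intro v
    rw [hN]
    simp only
    rw [Finset.card_insert_of_notMem (by simp), G.card_neighborFinset_eq_degree, hreg]
  have hinj : ∀ v, ∀ x ∈ N v, ∀ y ∈ N v, α x = α y → x = y := by
    intro v
    have hsurj : ∀ d : Fin (Δ + 1), ∃ u ∈ N v, α u = d := by
      intro d
      obtain ⟨u, hu, hud⟩ := hfrozen v d
      exact ⟨u, (hmem v u).2 hu, hud⟩
    have H := Finset.inj_on_of_surj_on_of_card_le (s := N v) (t := (Finset.univ : Finset (Fin (Δ + 1))))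
      (f := fun a _ => α a) (fun a _ => Finset.mem_univ _)
      (fun d _ => by obtain ⟨u, hu, hud⟩ := hsurj d; exact ⟨u, hu, hud⟩)
      (by simp [hcardN v])
    intro x hx y hy h
    exact H hx hy h
  have hEU : ∀ v : V, ∃! x : V, α x = c ∧ (v = x ∨ G.Adj x v) := by
    intro v
    obtain ⟨x, hx, hxc⟩ := hfrozen v c
    have hxN : x ∈ N v := (hmem v x).2 hx
    refine ⟨x, ⟨hxc, ?_⟩, ?_⟩
    · rcases hx with h | h
      · exact Or.inl h.symm
      · exact Or.inr h.symm
    · rintro y ⟨hyc, hy⟩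
      have hyN : y ∈ N v := (hmem v y).2 (by rcases hy with h | h; exact Or.inl h.symm; exact Or.inr h.symm)
      exact hinj v y hyN x hxN (hyc.trans hxc.symm)
  refine ⟨?_, hEU⟩
  set X : Finset V := Finset.univ.filter (fun v => α v = c) with hX
  have hcover : Finset.univ = X.biUnion N := by
    ext v
    simp only [Finset.mem_univ, true_iff, Finset.mem_biUnion]
    obtain ⟨x, ⟨hxc, hx⟩, _⟩ := hEU v
    exact ⟨x, Finset.mem_filter.2 ⟨Finset.mem_univ _, hxc⟩, (hmem x v).2 hx⟩
  have hdisj : ∀ x ∈ X, ∀ y ∈ X, x ≠ y → Disjoint (N x) (N y) := by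
    intro x hx y hy hxy
    rw [Finset.disjoint_left]
    intro v hvx hvy
    simp only [hX, Finset.mem_filter] at hx hy
    obtain ⟨w, _, huniq⟩ := hEU v
    have h1 : x = w := huniq x ⟨hx.2, (hmem x v).1 hvx⟩
    have h2 : y = w := huniq y ⟨hy.2, (hmem y v).1 hvy⟩
    exact hxy (h1.trans h2.symm)
  have hcount : Fintype.card V = X.card * (Δ + 1) := by
    rw [← Finset.card_univ, hcover, Finset.card_biUnion hdisj]
    rw [Finset.sum_congr rfl (fun x _ => hcardN x), Finset.sum_const, smul_eq_mul]
  rw [Nat.card_eq_fintype_card, Fintype.card_subtype, hcount]
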